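/- Given consecutive values W_j(u) and W_{j+1}(u) in the tree dynamic program, if the neighbor v_j inducing stub length ℓ_j(u) is a child of u, then W_{j+1}(u) = W_j(u) + (ℓ_{j+1}(u) − ℓ_j(u)) − long(v_j) + short(v_j); if v_j is the parent of u, then W_{j+1}(u) = W_j(u) + (ℓ_{j+1}(u) − ℓ_j(u)). Consequently all values W_0(u),...,W_{δ_u}(u) can be computed from the children's values using O(δ_u) arithmetic operations. -/
import Mathlib


/-- incremental computation of consecutive values in the tree dynamic
program for MaxSPED.

Setting as in the tree DP: `C` is a rooted tree intersection graph (root `r`, parent map);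
vertex `u` has candidate stub lengths `ℓ u 0` (full segment) and `ℓ u 1 ≤ … ≤ ℓ u (δ u)`
sorted increasingly; `covers u i v` says stub `i` of `u` covers the crossing point with
`v`; `W` satisfies the recurrence with `short`/`long` as in the DP.  Let `vj` be the
neighbor of `u` inducing the stub length `ℓ u j` (so stub `i` of `u` covers the crossing
with `vj` iff `i = 0` or `j + 1 ≤ i ≤ δ u`), and suppose crossing coverage of the other
neighbors is unchanged between stubs `j` and `j+1`.  Then:
if `vj` is a child of `u`, `W u (j+1) = W u j + (ℓ u (j+1) - ℓ u j) - long vj + short vj u`;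
if `vj` is the parent of `u`, `W u (j+1) = W u j + (ℓ u (j+1) - ℓ u j)`.
(Consequently all values `W u 0, …, W u (δ u)` can be obtained from the children's values
with O(δ u) arithmetic operations.) -/
theorem stmt_6 {V : Type*} [Fintype V] [DecidableEq V]
    (r : V) (parent : V → V) (depth : V → ℕ)
    (hroot : parent r = r)
    (hdepth : ∀ v, v ≠ r → depth (parent v) + 1 = depth v)
    (cross : V → V → Prop)
    (hcross : ∀ u v, cross u v ↔ u ≠ v ∧ (parent u = v ∨ parent v = u))
    (δ : V → ℕ) (ℓ : V → ℕ → ℝ)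
    (covers : V → ℕ → V → Prop) [∀ u i v, Decidable (covers u i v)]
    (W : V → ℕ → ℝ)
    (short : V → V → ℝ) (long : V → ℝ)
    (hshort : ∀ v u, short v u = sSup {x | ∃ j, 1 ≤ j ∧ j ≤ δ v ∧ ¬ covers v j u ∧ x = W v j})
    (hlong : ∀ v, long v = sSup {x | ∃ j ≤ δ v, x = W v j})
    (hW : ∀ u, ∀ i ≤ δ u, W u i = ℓ u i +
      ∑ v ∈ Finset.univ.filter (fun v => parent v = u ∧ v ≠ u),
        (if covers u i v then short v u else long v))
    (u : V) (j : ℕ) (hj : 1 ≤ j) (hj' : j + 1 ≤ δ u)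
    (vj : V) (hvj : cross u vj)
    (hthr : ∀ i, covers u i vj ↔ (i = 0 ∨ (j + 1 ≤ i ∧ i ≤ δ u)))
    (hother : ∀ v, cross u v → v ≠ vj → (covers u j v ↔ covers u (j + 1) v)) :
    (parent vj = u → vj ≠ u →
      W u (j + 1) = W u j + (ℓ u (j + 1) - ℓ u j) - long vj + short vj u) ∧
    (parent u = vj → u ≠ vj →
      W u (j + 1) = W u j + (ℓ u (j + 1) - ℓ u j)) := by
  have hjd : j ≤ δ u := Nat.le_of_succ_le hj'
  have hcovj1 : covers u (j+1) vj := (hthr (j+1)).2 (Or.inr ⟨le_refl _, hj'⟩)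
  have hcovj : ¬ covers u j vj := by
    intro h
    rcases (hthr j).1 h with h0 | ⟨h1, _⟩ <;> omega
  have h1 := hW u j hjd
  have h2 := hW u (j+1) hj'
  constructor
  · intro hp hne
    have hvjS : vj ∈ Finset.univ.filter (fun v => parent v = u ∧ v ≠ u) := by
      simp [hp, hne]
    rw [h1, h2, ← Finset.add_sum_erase _ _ hvjS, ← Finset.add_sum_erase _ _ hvjS]
    have hsum : ∑ v ∈ (Finset.univ.filter (fun v => parent v = u ∧ v ≠ u)).erase vj,
          (if covers u (j+1) v then short v u else long v)
        = ∑ v ∈ (Finset.univ.filter (fun v => parent v = u ∧ v ≠ u)).erase vj,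
          (if covers u j v then short v u else long v) := by
      apply Finset.sum_congr rfl
      intro v hv
      have hv' := Finset.mem_erase.mp hv
      have hm := (Finset.mem_filter.mp hv'.2).2
      have hcr : cross u v := (hcross u v).2 ⟨Ne.symm hm.2, Or.inr hm.1⟩
      simp only [hother v hcr hv'.1]
    rw [hsum]
    simp only [hcovj1, hcovj, if_true, if_false, if_pos, if_neg]
    ring
  · intro hp hne
    have hnotchild : ¬ (parent vj = u ∧ vj ≠ u) := by
      rintro ⟨hc1, hc2⟩
      by_cases hur : u = r
      · subst hur; rw [hroot] at hp; exact hne hp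
      by_cases hvr : vj = r
      · subst hvr; rw [hroot] at hc1; exact hur hc1.symm
      · have d1 := hdepth u hur
        have d2 := hdepth vj hvr
        rw [hp] at d1; rw [hc1] at d2; omega
    have hsum : ∑ v ∈ (Finset.univ.filter (fun v => parent v = u ∧ v ≠ u)),
          (if covers u (j+1) v then short v u else long v)
        = ∑ v ∈ (Finset.univ.filter (fun v => parent v = u ∧ v ≠ u)),
          (if covers u j v then short v u else long v) := by
      apply Finset.sum_congr rfl
      intro v hv
      have hm := (Finset.mem_filter.mp hv).2
      have hvne : v ≠ vj := by rintro rfl; exact hnotchild hm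
      have hcr : cross u v := (hcross u v).2 ⟨Ne.symm hm.2, Or.inr hm.1⟩
      simp only [hother v hcr hvne]
    rw [h1, h2, hsum]
    ring
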